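/- Let $a > 0$, $p > 1$, $F_0 > 0$, $T \in (0,\infty]$, and let $g : [0,T) \to \mathbb{R}$ be continuous with $g(t) \ge F_0$ for all $t$. Suppose $u : [0,T) \to (0,\infty)$ is differentiable and satisfies $u'(t) = -a\,u(t) + u(t)^p g(t)$ for all $t \in [0,T)$. Then for every $t \in [0,T)$ one has $u(0)^{1-p} - \big(1 - e^{(1-p)at}\big)a^{-1}F_0 > 0$ and the lower bound $u(t) \ge e^{-at}\Big(u(0)^{1-p} - \big(1 - e^{(1-p)at}\big)a^{-1}F_0\Big)^{-\frac{1}{p-1}}$. -/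

import Mathlib

open Real
open scoped ENNReal

/-- Lower bound for positive solutions of `u' = -a u + u^p g(t)` when `g ≥ F₀ > 0`. -/
theorem bernoulli_lower_bound
    (a p F₀ : ℝ) (ha : 0 < a) (hp : 1 < p) (hF₀ : 0 < F₀)
    (T : ℝ≥0∞) (hT : 0 < T)
    (g : ℝ → ℝ)
    (hg_cont : ContinuousOn g {t : ℝ | 0 ≤ t ∧ ENNReal.ofReal t < T})
    (hg_lb : ∀ t : ℝ, 0 ≤ t → ENNReal.ofReal t < T → F₀ ≤ g t)
    (u u' : ℝ → ℝ)
    (hupos : ∀ t : ℝ, 0 ≤ t → ENNReal.ofReal t < T → 0 < u t)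
    (hderiv : ∀ t : ℝ, 0 ≤ t → ENNReal.ofReal t < T → HasDerivAt u (u' t) t)
    (heq : ∀ t : ℝ, 0 ≤ t → ENNReal.ofReal t < T →
      u' t = -a * u t + u t ^ p * g t) :
    ∀ t : ℝ, 0 ≤ t → ENNReal.ofReal t < T →
      0 < u 0 ^ (1 - p) - (1 - Real.exp ((1 - p) * a * t)) * a⁻¹ * F₀ ∧
      u t ≥ Real.exp (-a * t) *
        (u 0 ^ (1 - p) - (1 - Real.exp ((1 - p) * a * t)) * a⁻¹ * F₀)
          ^ (-(1 / (p - 1))) := by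
  intro t ht htT
  set E : ℝ → ℝ := fun s => Real.exp ((1 - p) * a * s) with hEdef
  set ψ : ℝ → ℝ := fun s => u s ^ (1 - p) * E s - F₀ * a⁻¹ * E s with hψdef
  -- domain facts for points in [0, t]
  have hdom : ∀ s : ℝ, 0 ≤ s → s ≤ t → 0 ≤ s ∧ ENNReal.ofReal s < T := by
    intro s hs hst
    exact ⟨hs, lt_of_le_of_lt (ENNReal.ofReal_le_ofReal hst) htT⟩
  -- derivative of E
  have hE' : ∀ s : ℝ, HasDerivAt E ((1 - p) * a * E s) s := by
    intro s
    have h1 : HasDerivAt (fun x : ℝ => (1 - p) * a * x) ((1 - p) * a) s := by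
      simpa using (hasDerivAt_id s).const_mul ((1 - p) * a)
    have := h1.exp
    simpa [hEdef, mul_comm] using this
  -- derivative of ψ on the domain
  have hψ' : ∀ s : ℝ, 0 ≤ s → ENNReal.ofReal s < T →
      HasDerivAt ψ ((1 - p) * (g s - F₀) * E s) s := by
    intro s hs hsT
    have hx : 0 < u s := hupos s hs hsT
    have hx0 : u s ≠ 0 := ne_of_gt hx
    have hpow : HasDerivAt (fun y => u y ^ (1 - p)) (u' s * (1 - p) * u s ^ (1 - p - 1)) s :=
      (hderiv s hs hsT).rpow_const (Or.inl hx0)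
    have hmul := (hpow.mul (hE' s)).sub ((hE' s).const_mul (F₀ * a⁻¹))
    have hkey : u' s * (1 - p) * u s ^ (1 - p - 1) * E s +
        u s ^ (1 - p) * ((1 - p) * a * E s) - F₀ * a⁻¹ * ((1 - p) * a * E s)
        = (1 - p) * (g s - F₀) * E s := by
      rw [heq s hs hsT]
      have h1 : u s ^ (1 - p - 1) = u s ^ (1 - p) / u s := by
        rw [Real.rpow_sub hx, Real.rpow_one]
      have h2 : u s ^ p * u s ^ (1 - p) = u s := by
        rw [← Real.rpow_add hx]
        norm_num
      rw [h1]
      field_simp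
      linear_combination ((1 - p) * g s * E s) * h2
    exact hkey ▸ hmul
  -- ψ is antitone on [0, t]
  have hanti : AntitoneOn ψ (Set.Icc 0 t) := by
    apply antitoneOn_of_deriv_nonpos (convex_Icc 0 t)
    · intro s hs
      obtain ⟨hs0, hsT⟩ := hdom s hs.1 hs.2
      exact ((hψ' s hs0 hsT).continuousAt).continuousWithinAt
    · intro s hs
      rw [interior_Icc] at hs
      obtain ⟨hs0, hsT⟩ := hdom s hs.1.le hs.2.le
      exact ((hψ' s hs0 hsT).differentiableAt).differentiableWithinAt
    · intro s hs
      rw [interior_Icc] at hs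
      obtain ⟨hs0, hsT⟩ := hdom s hs.1.le hs.2.le
      rw [(hψ' s hs0 hsT).deriv]
      have h1 : (1 - p) * (g s - F₀) ≤ 0 :=
        mul_nonpos_of_nonpos_of_nonneg (by linarith) (by linarith [hg_lb s hs0 hsT])
      exact mul_nonpos_of_nonpos_of_nonneg h1 (Real.exp_pos _).le
  have hψt : ψ t ≤ ψ 0 := hanti (Set.left_mem_Icc.2 ht) ⟨ht, le_refl t⟩ ht
  have hE0 : E 0 = 1 := by simp [hEdef]
  -- key inequality: u t ^ (1-p) * E t ≤ B
  set B : ℝ := u 0 ^ (1 - p) - (1 - Real.exp ((1 - p) * a * t)) * a⁻¹ * F₀ with hBdef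
  have hkey : u t ^ (1 - p) * E t ≤ B := by
    have := hψt
    simp only [hψdef, hE0, mul_one] at this
    have : u t ^ (1 - p) * E t ≤ u 0 ^ (1 - p) - F₀ * a⁻¹ + F₀ * a⁻¹ * E t := by linarith
    calc u t ^ (1 - p) * E t ≤ u 0 ^ (1 - p) - F₀ * a⁻¹ + F₀ * a⁻¹ * E t := this
      _ = B := by rw [hBdef]; ring
  have hxt : 0 < u t := hupos t ht htT
  have hpos : 0 < u t ^ (1 - p) * E t :=
    mul_pos (Real.rpow_pos_of_pos hxt _) (Real.exp_pos _)
  have hBpos : 0 < B := lt_of_lt_of_le hpos hkey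
  refine ⟨hBpos, ?_⟩
  -- raise to power c = -(1/(p-1)) < 0
  set c : ℝ := -(1 / (p - 1)) with hcdef
  have hc0 : c ≤ 0 := by
    rw [hcdef]
    have hpm : (0:ℝ) < p - 1 := by linarith
    have : (0:ℝ) < 1 / (p - 1) := by positivity
    linarith
  have hrpow := Real.rpow_le_rpow_of_nonpos hpos hkey hc0
  have hsplit : (u t ^ (1 - p) * E t) ^ c = u t * Real.exp (a * t) := by
    rw [Real.mul_rpow (Real.rpow_pos_of_pos hxt _).le (Real.exp_pos _).le,
      ← Real.rpow_mul hxt.le]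
    have hpm : p - 1 ≠ 0 := by intro h; nlinarith
    have h1 : (1 - p) * c = 1 := by
      rw [hcdef]; field_simp; ring
    have h2 : (Real.exp ((1 - p) * a * t)) ^ c = Real.exp (a * t) := by
      rw [← Real.exp_mul]
      congr 1
      have : (1 - p) * a * t * c = ((1 - p) * c) * (a * t) := by ring
      rw [this, h1, one_mul]
    rw [h1, Real.rpow_one, h2]
  rw [hsplit] at hrpow
  -- hrpow : B ^ c ≤ u t * exp (a t)
  have hexp : Real.exp (-a * t) * Real.exp (a * t) = 1 := by
    rw [← Real.exp_add]; norm_num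
  have := mul_le_mul_of_nonneg_left hrpow (Real.exp_pos (-a * t)).le
  calc Real.exp (-a * t) * B ^ c ≤ Real.exp (-a * t) * (u t * Real.exp (a * t)) := this
    _ = (Real.exp (-a * t) * Real.exp (a * t)) * u t := by ring
    _ = u t := by rw [hexp, one_mul]
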